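/- Let p be an odd prime, let n ≥ 1, set k = 2n, and let χ be a primitive Dirichlet character of conductor p^k. Let ℓ be an integer such that χ(1 + p^n x) = e_{p^n}(ℓ x) for all integers x. Then for every integer t₀ with t₀ ≡ −ℓ (mod p^n), one has τ(χ) = p^n · χ(t₀) · e_{p^k}(t₀); in particular the value χ(t₀) e_{p^k}(t₀) is the same for all such t₀. -/

import Mathlib

open Complex

/-- `eN q x = e^{2πix/q}`. -/
noncomputable def eN (q : ℕ) (x : ℤ) : ℂ := Complex.exp (2 * Real.pi * Complex.I * x / q)

lemma eN_add (q : ℕ) (x y : ℤ) : eN q (x + y) = eN q x * eN q y := by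
  simp only [eN, ← Complex.exp_add]
  congr 1
  push_cast
  ring

lemma eN_self_mul (q : ℕ) (hq : q ≠ 0) (x : ℤ) : eN q ((q : ℤ) * x) = 1 := by
  have hq' : (q : ℂ) ≠ 0 := Nat.cast_ne_zero.mpr hq
  have : (2 * (Real.pi : ℂ) * Complex.I * ((q : ℤ) * x : ℤ) / q) = (x : ℤ) * (2 * Real.pi * Complex.I) := by
    push_cast
    field_simp
  rw [eN, this, Complex.exp_int_mul_two_pi_mul_I]

lemma eN_periodic (q : ℕ) (hq : q ≠ 0) (x y : ℤ) : eN q (x + q * y) = eN q x := by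
  rw [eN_add, eN_self_mul q hq, mul_one]

lemma eN_eq_one_iff (q : ℕ) (hq : q ≠ 0) (x : ℤ) : eN q x = 1 ↔ (q : ℤ) ∣ x := by
  have hq' : (q : ℂ) ≠ 0 := Nat.cast_ne_zero.mpr hq
  have h2 : (2 * (Real.pi : ℂ) * Complex.I) ≠ 0 := by
    simp [Real.pi_ne_zero, Complex.I_ne_zero]
  rw [eN, Complex.exp_eq_one_iff]
  constructor
  · rintro ⟨k, hk⟩
    refine ⟨k, ?_⟩
    have hx : (x : ℂ) = k * q := by
      field_simp at hk
      have hk' : (2 * (Real.pi : ℂ) * Complex.I) * (x : ℂ)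
          = (2 * (Real.pi : ℂ) * Complex.I) * ((k : ℂ) * q) := by linear_combination (2 * (Real.pi : ℂ) * Complex.I) * hk
      exact mul_left_cancel₀ h2 hk'
    have hx' : x = k * q := by exact_mod_cast hx
    rw [hx', mul_comm]
  · rintro ⟨k, hk⟩
    refine ⟨k, ?_⟩
    subst hk
    push_cast
    field_simp

lemma eN_geom_sum (M : ℕ) (hM : M ≠ 0) (d : ℤ) :
    ∑ b ∈ Finset.range M, eN M (d * b) = if (M : ℤ) ∣ d then (M : ℂ) else 0 := by
  have hpow : ∀ b : ℕ, eN M (d * b) = (eN M d) ^ b := by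
    intro b
    rw [eN, eN, ← Complex.exp_nat_mul]
    congr 1
    push_cast
    ring
  rw [Finset.sum_congr rfl fun b _ => hpow b]
  by_cases h : (M : ℤ) ∣ d
  · rw [if_pos h, (eN_eq_one_iff M hM d).mpr h]
    simp
  · rw [if_neg h]
    have hne : eN M d ≠ 1 := fun hc => h ((eN_eq_one_iff M hM d).mp hc)
    rw [geom_sum_eq hne]
    have : eN M d ^ M = 1 := by
      rw [← hpow M]
      exact (eN_eq_one_iff M hM _).mpr ⟨d, mul_comm d M⟩
    rw [this, sub_self, zero_div]

lemma eN_mul_left (a b : ℕ) (ha : a ≠ 0) (x : ℤ) : eN (a * b) ((a : ℤ) * x) = eN b x := by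
  have ha' : (a : ℂ) ≠ 0 := Nat.cast_ne_zero.mpr ha
  rw [eN, eN]
  congr 1
  rw [mul_div_assoc, mul_div_assoc]
  congr 1
  push_cast
  rw [mul_div_mul_left _ _ ha']

section aux

variable {p n : ℕ} (hp : p.Prime) (χ : DirichletCharacter ℂ (p ^ (2 * n))) (ℓ : ℤ)

lemma aux_nonunit (s b : ℤ) (hs : ¬ IsUnit ((s : ZMod (p ^ n)))) :
    χ (((s + (p ^ n : ℕ) * b : ℤ) : ZMod (p ^ (2 * n)))) = 0 := by
  apply χ.map_nonunit
  intro hu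
  apply hs
  have hdvd : p ^ n ∣ p ^ (2 * n) := pow_dvd_pow p (by omega)
  have h2 := hu.map (ZMod.castHom hdvd (ZMod (p ^ n)))
  rw [map_intCast] at h2
  have h3 : ((s + (p ^ n : ℕ) * b : ℤ) : ZMod (p ^ n)) = ((s : ZMod (p ^ n))) := by
    have h4 : (((p ^ n : ℕ) : ℤ) : ZMod (p ^ n)) = 0 := by
      rw [Int.cast_natCast, ZMod.natCast_self]
    rw [Int.cast_add, Int.cast_mul, h4, zero_mul, add_zero]
  rwa [h3] at h2

lemma aux_unit (hℓ : ∀ x : ℤ, χ ((1 + p ^ n * x : ℤ) : ZMod (p ^ (2 * n))) = eN (p ^ n) (ℓ * x))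
    (hp' : p ≠ 0) (s : ℤ) (hs : IsUnit ((s : ZMod (p ^ n)))) :
    ∃ c : ℤ, s * c ≡ 1 [ZMOD (p ^ n : ℕ)] ∧ ∀ b : ℤ,
      χ (((s + (p ^ n : ℕ) * b : ℤ) : ZMod (p ^ (2 * n)))) * eN (p ^ (2 * n)) (s + (p ^ n : ℕ) * b)
        = χ ((s : ZMod (p ^ (2 * n)))) * eN (p ^ (2 * n)) s * eN (p ^ n) ((ℓ * c + 1) * b) := by
  haveI : NeZero (p ^ n) := ⟨pow_ne_zero _ hp'⟩
  set u : ZMod (p ^ n) := ((s : ℤ) : ZMod (p ^ n)) with hu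
  refine ⟨(u⁻¹.val : ℤ), ?_, ?_⟩
  case _ =>
    have : ((s * (u⁻¹.val : ℤ) : ℤ) : ZMod (p ^ n)) = ((1 : ℤ) : ZMod (p ^ n)) := by
      push_cast
      rw [ZMod.natCast_val, ZMod.cast_id, ← hu]
      exact ZMod.mul_inv_of_unit u hs
    exact (ZMod.intCast_eq_intCast_iff _ _ _).mp this
  case _ =>
    intro b
    set c : ℤ := (u⁻¹.val : ℤ) with hc
    have h1 : s * c ≡ 1 [ZMOD (p ^ n : ℕ)] := by
      have : ((s * c : ℤ) : ZMod (p ^ n)) = ((1 : ℤ) : ZMod (p ^ n)) := by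
        push_cast [hc]
        rw [ZMod.natCast_val, ZMod.cast_id, ← hu]
        exact ZMod.mul_inv_of_unit u hs
      exact (ZMod.intCast_eq_intCast_iff _ _ _).mp this
    obtain ⟨k, hk⟩ := h1.dvd
    -- hk : 1 - s * c = (p^n : ℤ) * k  (check orientation)
    have hNM : p ^ (2 * n) = p ^ n * p ^ n := by rw [two_mul, pow_add]
    have hcast : ((s + (p ^ n : ℕ) * b : ℤ) : ZMod (p ^ (2 * n)))
        = ((s : ℤ) : ZMod (p ^ (2 * n))) * ((1 + (p : ℤ) ^ n * (c * b) : ℤ) : ZMod (p ^ (2 * n))) := by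
      rw [← Int.cast_mul, ZMod.intCast_eq_intCast_iff]
      have : (s * (1 + (p : ℤ) ^ n * (c * b))) - (s + (p ^ n : ℕ) * b)
          = ((p ^ (2 * n) : ℕ) : ℤ) * (-(b * k)) := by
        have hN : ((p ^ (2 * n) : ℕ) : ℤ) = (p : ℤ) ^ n * (p : ℤ) ^ n := by
          push_cast [hNM]; ring
        rw [hN]
        push_cast at hk ⊢
        linear_combination (-((p : ℤ) ^ n * b)) * hk
      exact Int.modEq_iff_dvd.mpr ⟨-(b * k), this⟩
    have heN : eN (p ^ (2 * n)) (s + (p ^ n : ℕ) * b)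
        = eN (p ^ (2 * n)) s * eN (p ^ n) b := by
      rw [eN_add]
      congr 1
      have : ((p ^ n : ℕ) : ℤ) * b = ((p ^ n : ℕ) : ℤ) * b := rfl
      calc eN (p ^ (2 * n)) ((p ^ n : ℕ) * b)
          = eN (p ^ n * p ^ n) (((p ^ n : ℕ) : ℤ) * b) := by rw [hNM]
        _ = eN (p ^ n) b := eN_mul_left _ _ (pow_ne_zero _ hp') b
    have hχmul : χ (((s + (p ^ n : ℕ) * b : ℤ) : ZMod (p ^ (2 * n))))
        = χ ((s : ZMod (p ^ (2 * n)))) * eN (p ^ n) (ℓ * (c * b)) := by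
      rw [hcast, map_mul, hℓ (c * b)]
    rw [hχmul, heN]
    have harg : (ℓ * c + 1) * b = ℓ * (c * b) + b := by ring
    rw [harg, eN_add]
    ring

lemma aux_dvd_iff (hp' : p ≠ 0) (c s : ℤ) (h1 : s * c ≡ 1 [ZMOD (p ^ n : ℕ)]) :
    ((p ^ n : ℕ) : ℤ) ∣ (ℓ * c + 1) ↔ s ≡ -ℓ [ZMOD (p ^ n : ℕ)] := by
  obtain ⟨k1, hk1⟩ := h1.dvd
  -- hk1 : 1 - s * c = (p^n) * k1
  constructor
  · rintro ⟨k, hk⟩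
    rw [Int.modEq_iff_dvd]
    exact ⟨-(s * k) - ℓ * k1, by linear_combination (-s) * hk + (-ℓ) * hk1⟩
  · intro hmod
    obtain ⟨k2, hk2⟩ := Int.modEq_iff_dvd.mp hmod
    -- hk2 : -ℓ - s = (p^n) * k2
    exact ⟨k1 - c * k2, by linear_combination hk1 + (-c) * hk2⟩

lemma aux_inner (hℓ : ∀ x : ℤ, χ ((1 + p ^ n * x : ℤ) : ZMod (p ^ (2 * n))) = eN (p ^ n) (ℓ * x))
    (hp' : p ≠ 0) (s : ℤ) :
    ∑ b ∈ Finset.range (p ^ n),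
        χ (((s + (p ^ n : ℕ) * (b : ℤ) : ℤ) : ZMod (p ^ (2 * n)))) *
          eN (p ^ (2 * n)) (s + (p ^ n : ℕ) * (b : ℤ))
      = if s ≡ -ℓ [ZMOD (p ^ n : ℕ)] then
          ((p ^ n : ℕ) : ℂ) * (χ ((s : ZMod (p ^ (2 * n)))) * eN (p ^ (2 * n)) s) else 0 := by
  by_cases hs : IsUnit ((s : ZMod (p ^ n)))
  · obtain ⟨c, h1, hb⟩ := aux_unit χ ℓ hℓ hp' s hs
    simp only [hb]
    rw [← Finset.mul_sum, eN_geom_sum _ (pow_ne_zero n hp')]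
    by_cases hcond : s ≡ -ℓ [ZMOD (p ^ n : ℕ)]
    · rw [if_pos ((aux_dvd_iff ℓ hp' c s h1).mpr hcond), if_pos hcond]
      ring
    · rw [if_neg (fun h => hcond ((aux_dvd_iff ℓ hp' c s h1).mp h)), if_neg hcond, mul_zero]
  · have hs0 : χ ((s : ZMod (p ^ (2 * n)))) = 0 := by
      have := aux_nonunit χ s 0 hs
      simpa using this
    rw [Finset.sum_eq_zero (fun b _ => by rw [aux_nonunit χ s (b : ℤ) hs, zero_mul])]
    split_ifs <;> simp [hs0]

lemma aux_const (hℓ : ∀ x : ℤ, χ ((1 + p ^ n * x : ℤ) : ZMod (p ^ (2 * n))) = eN (p ^ n) (ℓ * x))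
    (hp' : p ≠ 0) (s t : ℤ) (hs : s ≡ -ℓ [ZMOD (p ^ n : ℕ)]) (ht : t ≡ -ℓ [ZMOD (p ^ n : ℕ)]) :
    χ ((s : ZMod (p ^ (2 * n)))) * eN (p ^ (2 * n)) s
      = χ ((t : ZMod (p ^ (2 * n)))) * eN (p ^ (2 * n)) t := by
  have hst : s ≡ t [ZMOD (p ^ n : ℕ)] := hs.trans ht.symm
  obtain ⟨b, hb⟩ := Int.modEq_iff_dvd.mp hst
  have htb : t = s + (p ^ n : ℕ) * b := by linarith
  by_cases hu : IsUnit ((s : ZMod (p ^ n)))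
  · obtain ⟨c, h1, hf⟩ := aux_unit χ ℓ hℓ hp' s hu
    obtain ⟨k, hk⟩ := (aux_dvd_iff ℓ hp' c s h1).mpr hs
    rw [htb, hf b, hk]
    have harg : (((p ^ n : ℕ) : ℤ) * k) * b = ((p ^ n : ℕ) : ℤ) * (k * b) := by ring
    rw [harg, eN_self_mul _ (pow_ne_zero n hp'), mul_one]
  · have h1 : χ ((s : ZMod (p ^ (2 * n)))) = 0 := by
      have := aux_nonunit χ s 0 hu
      simpa using this
    have h2 : χ ((t : ZMod (p ^ (2 * n)))) = 0 := by
      rw [htb]; exact aux_nonunit χ s b hu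
    rw [h1, h2, zero_mul, zero_mul]

end aux

/-- Evaluation of the Gauss sum of a primitive character of even prime power conductor. -/
theorem gauss_sum_eval_even_exponent (p n : ℕ) (hp : p.Prime) (hodd : Odd p) (hn : 1 ≤ n)
    (χ : DirichletCharacter ℂ (p ^ (2 * n))) (hχ : χ.IsPrimitive) (ℓ : ℤ)
    (hℓ : ∀ x : ℤ, χ ((1 + p ^ n * x : ℤ) : ZMod (p ^ (2 * n))) = eN (p ^ n) (ℓ * x)) :
    ∀ t₀ : ℤ, t₀ ≡ -ℓ [ZMOD (p ^ n : ℕ)] →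
      haveI : NeZero (p ^ (2 * n)) := ⟨pow_ne_zero _ hp.ne_zero⟩
      (∑ t : ZMod (p ^ (2 * n)), χ t * eN (p ^ (2 * n)) (t.val : ℤ)) =
        (p : ℂ) ^ n * χ ((t₀ : ℤ) : ZMod (p ^ (2 * n))) * eN (p ^ (2 * n)) t₀ := by
  intro t₀ ht₀
  haveI : NeZero (p ^ (2 * n)) := ⟨pow_ne_zero _ hp.ne_zero⟩
  have hp' : p ≠ 0 := hp.ne_zero
  have hM0 : p ^ n ≠ 0 := pow_ne_zero _ hp'
  have hMpos : 0 < p ^ n := Nat.pos_of_ne_zero hM0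
  have hNM : p ^ (2 * n) = p ^ n * p ^ n := by rw [two_mul, pow_add]
  have stepA : (∑ t : ZMod (p ^ (2 * n)), χ t * eN (p ^ (2 * n)) (t.val : ℤ))
      = ∑ m ∈ Finset.range (p ^ (2 * n)),
          χ (((m : ℤ) : ZMod (p ^ (2 * n)))) * eN (p ^ (2 * n)) (m : ℤ) := by
    refine Finset.sum_nbij' (fun t => t.val) (fun m => ((m : ℕ) : ZMod (p ^ (2 * n))))
      ?_ ?_ ?_ ?_ ?_
    · intro t _; exact Finset.mem_range.mpr (ZMod.val_lt t)
    · intro m _; exact Finset.mem_univ _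
    · intro t _; exact ZMod.natCast_rightInverse t
    · intro m hm; exact ZMod.val_natCast_of_lt (Finset.mem_range.mp hm)
    · intro t _
      have h : (((t.val : ℕ) : ℤ) : ZMod (p ^ (2 * n))) = t := by
        rw [Int.cast_natCast, ZMod.natCast_val, ZMod.cast_id]
      rw [h]
  have stepB : (∑ m ∈ Finset.range (p ^ (2 * n)),
          χ (((m : ℤ) : ZMod (p ^ (2 * n)))) * eN (p ^ (2 * n)) (m : ℤ))
      = ∑ q ∈ Finset.range (p ^ n) ×ˢ Finset.range (p ^ n),
          χ ((((q.1 : ℤ) + (p ^ n : ℕ) * (q.2 : ℤ) : ℤ) : ZMod (p ^ (2 * n)))) *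
            eN (p ^ (2 * n)) ((q.1 : ℤ) + (p ^ n : ℕ) * (q.2 : ℤ)) := by
    refine Finset.sum_nbij' (fun m => (m % p ^ n, m / p ^ n)) (fun q => q.1 + p ^ n * q.2)
      ?_ ?_ ?_ ?_ ?_
    · intro m hm
      rw [Finset.mem_range, hNM] at hm
      refine Finset.mem_product.mpr ⟨Finset.mem_range.mpr (Nat.mod_lt _ hMpos),
        Finset.mem_range.mpr ?_⟩
      exact Nat.div_lt_of_lt_mul hm
    · intro q hq
      obtain ⟨h1, h2⟩ := Finset.mem_product.mp hq
      rw [Finset.mem_range] at h1 h2 ⊢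
      rw [hNM]
      have h2' : q.2 + 1 ≤ p ^ n := h2
      nlinarith
    · intro m _; exact Nat.mod_add_div m (p ^ n)
    · intro q hq
      obtain ⟨h1, h2⟩ := Finset.mem_product.mp hq
      rw [Finset.mem_range] at h1 h2
      simp [Nat.add_mul_mod_self_left, Nat.mod_eq_of_lt h1,
        Nat.add_mul_div_left _ _ hMpos, Nat.div_eq_of_lt h1]
    · intro m _
      have hm : ((m % p ^ n : ℕ) : ℤ) + ((p ^ n : ℕ) : ℤ) * ((m / p ^ n : ℕ) : ℤ) = (m : ℤ) := by
        exact_mod_cast congrArg (Nat.cast (R := ℤ)) (Nat.mod_add_div m (p ^ n))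
      rw [hm]
  have stepC : (∑ q ∈ Finset.range (p ^ n) ×ˢ Finset.range (p ^ n),
          χ ((((q.1 : ℤ) + (p ^ n : ℕ) * (q.2 : ℤ) : ℤ) : ZMod (p ^ (2 * n)))) *
            eN (p ^ (2 * n)) ((q.1 : ℤ) + (p ^ n : ℕ) * (q.2 : ℤ)))
      = ∑ a ∈ Finset.range (p ^ n),
          if ((a : ℤ)) ≡ -ℓ [ZMOD (p ^ n : ℕ)] then
            ((p ^ n : ℕ) : ℂ) * (χ (((a : ℤ) : ZMod (p ^ (2 * n)))) * eN (p ^ (2 * n)) (a : ℤ))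
          else 0 := by
    rw [Finset.sum_product]
    exact Finset.sum_congr rfl fun a _ => aux_inner χ ℓ hℓ hp' (a : ℤ)
  set a₀ : ℕ := ((-ℓ) % ((p ^ n : ℕ) : ℤ)).toNat with ha₀
  have hMZ : (0 : ℤ) < ((p ^ n : ℕ) : ℤ) := by exact_mod_cast hMpos
  have hnn : 0 ≤ (-ℓ) % ((p ^ n : ℕ) : ℤ) := Int.emod_nonneg _ (by omega)
  have hlt : (-ℓ) % ((p ^ n : ℕ) : ℤ) < ((p ^ n : ℕ) : ℤ) := Int.emod_lt_of_pos _ hMZ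
  have ha₀cast : ((a₀ : ℕ) : ℤ) = (-ℓ) % ((p ^ n : ℕ) : ℤ) := Int.toNat_of_nonneg hnn
  have ha₀M : a₀ < p ^ n := by omega
  have ha₀mod : ((a₀ : ℕ) : ℤ) ≡ -ℓ [ZMOD (p ^ n : ℕ)] := by
    show ((a₀ : ℕ) : ℤ) % _ = (-ℓ) % _
    rw [ha₀cast]
    exact Int.emod_emod_of_dvd _ dvd_rfl
  have stepD : (∑ a ∈ Finset.range (p ^ n),
          if ((a : ℤ)) ≡ -ℓ [ZMOD (p ^ n : ℕ)] then
            ((p ^ n : ℕ) : ℂ) * (χ (((a : ℤ) : ZMod (p ^ (2 * n)))) * eN (p ^ (2 * n)) (a : ℤ))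
          else 0)
      = ((p ^ n : ℕ) : ℂ) * (χ (((a₀ : ℤ) : ZMod (p ^ (2 * n)))) * eN (p ^ (2 * n)) (a₀ : ℤ)) := by
    rw [Finset.sum_eq_single a₀]
    · rw [if_pos ha₀mod]
    · intro a ha hne
      rw [if_neg]
      intro hcon
      apply hne
      have h1 : (a : ℤ) % ((p ^ n : ℕ) : ℤ) = (a : ℤ) :=
        Int.emod_eq_of_lt (by positivity) (by exact_mod_cast Finset.mem_range.mp ha)
      have h2 : (a : ℤ) % ((p ^ n : ℕ) : ℤ) = (-ℓ) % ((p ^ n : ℕ) : ℤ) := hcon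
      omega
    · intro h; exact absurd (Finset.mem_range.mpr ha₀M) h
  have stepE : χ (((a₀ : ℤ) : ZMod (p ^ (2 * n)))) * eN (p ^ (2 * n)) (a₀ : ℤ)
      = χ ((t₀ : ZMod (p ^ (2 * n)))) * eN (p ^ (2 * n)) t₀ :=
    aux_const χ ℓ hℓ hp' (a₀ : ℤ) t₀ ha₀mod ht₀
  rw [stepA, stepB, stepC, stepD, stepE]
  push_cast
  ring
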